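/- Let ξ₁ = ((1,1,1,0),(1,1,1,0)), ξ₂ = ((1,0,1,0),(0,0,1,0)), ξ₃ = ((1,1,1,0),(0,0,1,0)), ξ₄ = ((1,0,1,0),(0,1,1,0)), ξ₅ = ((0,1,1,0),(0,1,0,0)) in 𝔽₂^4 × 𝔽₂^4. Then each ξⱼ is odd, and the system ξ₁, …, ξ₅ is azygetic and essentially independent. -/
import Mathlib


/-- Theta characteristics for genus `g`, identified with pairs `(a, b) ∈ 𝔽₂^g × 𝔽₂^g`,
added componentwise. -/
abbrev ThetaChar (g : ℕ) := (Fin g → ZMod 2) × (Fin g → ZMod 2)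

/-- The parity form `q(c) = a · b = ∑ᵢ aᵢ bᵢ ∈ 𝔽₂`. -/
def qform {g : ℕ} (c : ThetaChar g) : ZMod 2 := ∑ i, c.1 i * c.2 i

/-- A characteristic is odd if `q(c) = 1`. -/
def IsOddChar {g : ℕ} (c : ThetaChar g) : Prop := qform c = 1

/-- A characteristic is even if `q(c) = 0`. -/
def IsEvenChar {g : ℕ} (c : ThetaChar g) : Prop := qform c = 0

/-- A triple `c₁, c₂, c₃` is azygetic if `q(c₁+c₂+c₃) + q(c₁) + q(c₂) + q(c₃) = 1`. -/
def AzyTriple {g : ℕ} (c₁ c₂ c₃ : ThetaChar g) : Prop :=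
  qform (c₁ + c₂ + c₃) + qform c₁ + qform c₂ + qform c₃ = 1

/-- An indexed system is azygetic if every triple of members with three distinct
indices is an azygetic triple. -/
def AzySystem {g n : ℕ} (c : Fin n → ThetaChar g) : Prop :=
  ∀ i j k : Fin n, i ≠ j → j ≠ k → i ≠ k → AzyTriple (c i) (c j) (c k)

/-- A system is essentially independent if every sum over a nonempty index subset of
even cardinality is nonzero. -/
def EssInd {g n : ℕ} (c : Fin n → ThetaChar g) : Prop :=
  ∀ s : Finset (Fin n), s.Nonempty → Even s.card → ∑ i ∈ s, c i ≠ 0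

/-- The explicit odd characteristics `ξ₁, …, ξ₅` from the proof of Lemma 3.1. -/
def ξ : Fin 5 → ThetaChar 4 :=
  ![(![1, 1, 1, 0], ![1, 1, 1, 0]),
    (![1, 0, 1, 0], ![0, 0, 1, 0]),
    (![1, 1, 1, 0], ![0, 0, 1, 0]),
    (![1, 0, 1, 0], ![0, 1, 1, 0]),
    (![0, 1, 1, 0], ![0, 1, 0, 0])]

/-- Each `ξⱼ` is odd, and the system `ξ₁, …, ξ₅` is azygetic and essentially
independent. -/
theorem xi_odd_azygetic_essentially_independent :
    (∀ j, IsOddChar (ξ j)) ∧ AzySystem ξ ∧ EssInd ξ := by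
  refine ⟨by unfold IsOddChar; decide, by unfold AzySystem AzyTriple; decide, by unfold EssInd; decide⟩
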